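/- Let n ≥ q ≥ 1 and 0 ≤ s ≤ n − q, and let w = w(n,q,s) be the wrinkle model. For every open neighborhood U ⊂ ℝⁿ of the disk D^q × {0} = {(y,z,0) : |y|² + z² ≤ 1}, there exists a smooth function γ : ℝⁿ → ℝ such that: (i) γ(y,z,x) = 3(z² + |y|² − 1) for all (y,z,x) ∈ ℝⁿ \ U; (ii) γ(y,z,0) > 0 for all (y,z) ∈ ℝ^q with (y,z,0) ∈ U; and (iii) for every point p = (y,z,x) ∈ ℝⁿ, the linear map R_p : ℝⁿ → ℝ^q obtained from the Jacobi matrix of w at p by replacing the entry ∂w_q/∂z = 3(z² + |y|² − 1) with γ(p) is surjective. The bundle map p ↦ R_p coincides with dw outside U and is an epimorphism on all of ℝⁿ (the regularized differential R(dw)). -/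

import Mathlib

/-- The wrinkle model `w(n,q,s) : ℝⁿ → ℝ^q`,
`w(y,z,x) = (y, z³ + 3(|y|² − 1)z − Σ_{i≤s} x_i² + Σ_{j>s} x_j²)`,
with `y ∈ ℝ^{q−1}` (`k = q−1`), `z ∈ ℝ`, `x ∈ ℝ^{n−q}` (`l = n−q`). -/
noncomputable def wmap (k l s : ℕ)
    (p : (EuclideanSpace ℝ (Fin k) × ℝ) × EuclideanSpace ℝ (Fin l)) :
    EuclideanSpace ℝ (Fin k) × ℝ :=
  (p.1.1, p.1.2^3 + 3*(‖p.1.1‖^2 - 1)*p.1.2 +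
    ∑ i : Fin l, (if (i : ℕ) < s then (-1:ℝ) else 1) * (p.2 i)^2)

/-- The linear map `R_p : ℝⁿ → ℝ^q` obtained from the Jacobi matrix of
`w(n,q,s)` at `p = (y,z,x)` by replacing the entry
`∂w_q/∂z = 3(z² + |y|² − 1)` with `γ(p)`: its first `q−1` rows are
`dy₁, …, dy_{q−1}` and its last row is
`(6y₁z, …, 6y_{q−1}z, γ(p), −2x₁, …, −2x_s, 2x_{s+1}, …, 2x_{n−q})`. -/
noncomputable def Rmap (k l s : ℕ)
    (γ : (EuclideanSpace ℝ (Fin k) × ℝ) × EuclideanSpace ℝ (Fin l) → ℝ)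
    (p v : (EuclideanSpace ℝ (Fin k) × ℝ) × EuclideanSpace ℝ (Fin l)) :
    EuclideanSpace ℝ (Fin k) × ℝ :=
  (v.1.1, (∑ i : Fin k, 6 * p.1.1 i * p.1.2 * v.1.1 i) + γ p * v.1.2 +
    ∑ j : Fin l, (if (j : ℕ) < s then (-2:ℝ) else 2) * p.2 j * v.2 j)

private abbrev WSp (k l : ℕ) := (EuclideanSpace ℝ (Fin k) × ℝ) × EuclideanSpace ℝ (Fin l)

open ContinuousLinearMap Manifold in
private lemma wmap_fderiv' (k l s : ℕ) (p v : WSp k l) :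
    fderiv ℝ (wmap k l s) p v = (v.1.1,
      (∑ i : Fin k, 6 * p.1.1 i * p.1.2 * v.1.1 i)
        + 3*(p.1.2^2 + ‖p.1.1‖^2 - 1) * v.1.2
        + ∑ j : Fin l, (if (j : ℕ) < s then (-2:ℝ) else 2) * p.2 j * v.2 j) := by
  set E := EuclideanSpace ℝ (Fin k)
  set F := EuclideanSpace ℝ (Fin l)
  set fy : WSp k l →L[ℝ] E := (fst ℝ E ℝ).comp (fst ℝ (E × ℝ) F) with hfy
  set fz : WSp k l →L[ℝ] ℝ := (snd ℝ E ℝ).comp (fst ℝ (E × ℝ) F) with hfz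
  have hy : HasFDerivAt (fun p : WSp k l => p.1.1) fy p :=
    (hasFDerivAt_fst.comp p hasFDerivAt_fst)
  have hz : HasFDerivAt (fun p : WSp k l => p.1.2) fz p :=
    (hasFDerivAt_snd.comp p hasFDerivAt_fst)
  have hx : ∀ j : Fin l, HasFDerivAt (fun p : WSp k l => p.2 j)
      ((EuclideanSpace.proj j).comp (snd ℝ (E × ℝ) F)) p :=
    fun j => (EuclideanSpace.proj (𝕜 := ℝ) j).hasFDerivAt.comp p hasFDerivAt_snd
  have hnorm : HasFDerivAt (fun p : WSp k l => ‖p.1.1‖^2)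
      (2 • (innerSL ℝ p.1.1).comp fy) p := hy.norm_sq
  have h2 := (((hnorm.sub_const 1).const_mul 3).mul hz)
  have h3 := (hasDerivAt_pow 3 p.1.2).comp_hasFDerivAt p hz
  have h4 := fun (j : Fin l) (_ : j ∈ (Finset.univ : Finset (Fin l))) =>
    ((hasDerivAt_pow 2 (p.2 j)).comp_hasFDerivAt p (hx j)).const_mul
      (if (j : ℕ) < s then (-1:ℝ) else 1)
  have hsum := HasFDerivAt.fun_sum h4
  have hw : HasFDerivAt (wmap k l s) _ p := hy.prodMk ((h3.add h2).add hsum)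
  rw [hw.fderiv]
  simp only [ContinuousLinearMap.prod_apply, ContinuousLinearMap.add_apply,
    ContinuousLinearMap.coe_comp', ContinuousLinearMap.coe_fst', ContinuousLinearMap.coe_snd',
    ContinuousLinearMap.smul_apply, ContinuousLinearMap.coe_sum', Finset.sum_apply,
    innerSL_apply_apply, Function.comp_apply, smul_eq_mul, PiLp.inner_apply, RCLike.inner_apply,
    conj_trivial, PiLp.proj_apply, hfy, hfz]
  refine Prod.ext rfl ?_
  dsimp only
  push_cast
  simp only [nsmul_eq_mul, pow_one]
  have e1 : ∑ x : Fin k, 6 * p.1.1 x * p.1.2 * v.1.1 x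
      = p.1.2 * (3 * (2 * ∑ x : Fin k, v.1.1 x * p.1.1 x)) := by
    rw [Finset.mul_sum, Finset.mul_sum, Finset.mul_sum]
    exact Finset.sum_congr rfl fun i _ => by ring
  have e2 : ∑ x : Fin l, (if (x : ℕ) < s then (-2:ℝ) else 2) * p.2 x * v.2 x
      = ∑ x : Fin l, (if (x : ℕ) < s then (-1:ℝ) else 1) * (2 * p.2 x * v.2 x) :=
    Finset.sum_congr rfl fun i _ => by split <;> ring
  rw [e1, e2]
  ring

private lemma rmap_surjective' (k l s : ℕ)
    (γ : (EuclideanSpace ℝ (Fin k) × ℝ) × EuclideanSpace ℝ (Fin l) → ℝ)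
    (p : (EuclideanSpace ℝ (Fin k) × ℝ) × EuclideanSpace ℝ (Fin l))
    (h : γ p ≠ 0 ∨ ∃ j, p.2 j ≠ 0) : Function.Surjective (Rmap k l s γ p) := by
  rintro ⟨a, t⟩
  set S := ∑ i : Fin k, 6 * p.1.1 i * p.1.2 * a i with hS
  rcases h with hγ | ⟨j₀, hj₀⟩
  · refine ⟨((a, (t - S)/γ p), 0), ?_⟩
    simp only [Rmap]
    refine Prod.ext rfl ?_
    show S + γ p * ((t - S)/γ p) + _ = t
    rw [mul_div_cancel₀ _ hγ]
    simp
  · set c : ℝ := (if (j₀ : ℕ) < s then (-2:ℝ) else 2) * p.2 j₀ with hc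
    have hcne : c ≠ 0 := by
      rw [hc]; split <;> exact mul_ne_zero (by norm_num) hj₀
    refine ⟨((a, 0), EuclideanSpace.single j₀ ((t - S)/c)), ?_⟩
    simp only [Rmap]
    refine Prod.ext rfl ?_
    show S + γ p * 0 + ∑ j : Fin l,
        (if (j : ℕ) < s then (-2:ℝ) else 2) * p.2 j * EuclideanSpace.single j₀ ((t - S)/c) j = t
    have hsum : ∑ j : Fin l,
        (if (j : ℕ) < s then (-2:ℝ) else 2) * p.2 j * EuclideanSpace.single j₀ ((t - S)/c) j
        = c * ((t - S)/c) := by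
      simp only [EuclideanSpace.single_apply, mul_ite, mul_zero]
      rw [Finset.sum_ite_eq' Finset.univ j₀]
      simp [hc]
    rw [hsum, mul_div_cancel₀ _ hcne]
    ring

open Manifold in
/-- For every open neighborhood `U` of the disk `D^q × {0}` there is a smooth
function `γ` equal to `3(z² + |y|² − 1)` outside `U`, positive on
`U ∩ (ℝ^q × {0})`, such that the regularized differential `R_p` (the Jacobi
matrix of `w` with the `∂w_q/∂z` entry replaced by `γ(p)`) is surjective at
every point; the bundle map `p ↦ R_p` coincides with `dw` outside `U`. -/
theorem exists_regularized_differential (n q s : ℕ)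
    (hq : 1 ≤ q) (hqn : q ≤ n) (hs : s ≤ n - q)
    (U : Set ((EuclideanSpace ℝ (Fin (q - 1)) × ℝ) × EuclideanSpace ℝ (Fin (n - q))))
    (hU : IsOpen U)
    (hDU : {p : (EuclideanSpace ℝ (Fin (q - 1)) × ℝ) × EuclideanSpace ℝ (Fin (n - q)) |
      ‖p.1.1‖^2 + p.1.2^2 ≤ 1 ∧ p.2 = 0} ⊆ U) :
    ∃ γ : (EuclideanSpace ℝ (Fin (q - 1)) × ℝ) × EuclideanSpace ℝ (Fin (n - q)) → ℝ,
      ContDiff ℝ (⊤ : ℕ∞) γ ∧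
      (∀ p ∉ U, γ p = 3*(p.1.2^2 + ‖p.1.1‖^2 - 1)) ∧
      (∀ p ∈ U, p.2 = 0 → 0 < γ p) ∧
      (∀ p, Function.Surjective (Rmap (q - 1) (n - q) s γ p)) ∧
      (∀ p ∉ U, ∀ v, Rmap (q - 1) (n - q) s γ p v =
        fderiv ℝ (wmap (q - 1) (n - q) s) p v) := by
  have hK : IsClosed {p : (EuclideanSpace ℝ (Fin (q-1)) × ℝ) × EuclideanSpace ℝ (Fin (n-q)) |
      ‖p.1.1‖^2 + p.1.2^2 ≤ 1 ∧ p.2 = 0} :=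
    IsClosed.inter
      (isClosed_le ((continuous_fst.fst.norm.pow 2).add (continuous_fst.snd.pow 2))
        continuous_const)
      (isClosed_eq continuous_snd continuous_const)
  obtain ⟨f, hf0, hf1, hf01⟩ :=
    exists_contMDiffMap_zero_one_of_isClosed (n := (⊤ : ℕ∞))
      (𝓘(ℝ, (EuclideanSpace ℝ (Fin (q-1)) × ℝ) × EuclideanSpace ℝ (Fin (n-q))))
      hU.isClosed_compl hK
      (Set.disjoint_left.2 fun p hp hpK => hp (hDU hpK))
  have hfsmooth : ContDiff ℝ (⊤ : ℕ∞) f := contMDiff_iff_contDiff.1 f.contMDiff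
  set γ : (EuclideanSpace ℝ (Fin (q-1)) × ℝ) × EuclideanSpace ℝ (Fin (n-q)) → ℝ :=
    fun p => 3*(p.1.2^2 + ‖p.1.1‖^2 - 1) + 4 * f p with hγdef
  have hγsmooth : ContDiff ℝ (⊤ : ℕ∞) γ :=
    (contDiff_const.mul ((((contDiff_snd.comp contDiff_fst).pow 2).add
      ((contDiff_norm_sq ℝ).comp (contDiff_fst.comp contDiff_fst))).sub
        contDiff_const)).add (contDiff_const.mul hfsmooth)
  have houtside : ∀ p ∉ U, γ p = 3*(p.1.2^2 + ‖p.1.1‖^2 - 1) := by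
    intro p hp
    have h0 : f p = 0 := hf0 hp
    simp [hγdef, h0]
  have hpos : ∀ p : (EuclideanSpace ℝ (Fin (q-1)) × ℝ) × EuclideanSpace ℝ (Fin (n-q)),
      p.2 = 0 → 0 < γ p := by
    intro p hp2
    by_cases hle : ‖p.1.1‖^2 + p.1.2^2 ≤ 1
    · have h1 : f p = 1 := hf1 ⟨hle, hp2⟩
      have := sq_nonneg ‖p.1.1‖
      have := sq_nonneg p.1.2
      simp only [hγdef, h1]
      linarith
    · have h1 : 1 < ‖p.1.1‖^2 + p.1.2^2 := lt_of_not_ge hle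
      have h2 : 0 ≤ f p := (hf01 p).1
      simp only [hγdef]
      linarith
  refine ⟨γ, hγsmooth, houtside, fun p _ h => hpos p h, ?_, ?_⟩
  · intro p
    apply rmap_surjective'
    by_cases hx : p.2 = 0
    · exact Or.inl (ne_of_gt (hpos p hx))
    · right
      by_contra hcon
      push_neg at hcon
      exact hx (PiLp.ext fun j => hcon j)
  · intro p hp v
    rw [wmap_fderiv']
    simp only [Rmap]
    exact Prod.ext rfl (by rw [houtside p hp])
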